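/- arXiv:1201.4134 — 3 statements merged into one kernel-verified Lean document; each statement's English description precedes it below -/
import Mathlib

section
/- Let y > 0 and let f : [0,2\pi] \to [0,\infty) be continuous. Then there is at most one function s : \mathbb{C}^+ \to \mathbb{C}^+ satisfying 1/s(z) = -z + y \int_0^{2\pi} f(\omega)/(1 + f(\omega) s(z)) d\omega for all z \in \mathbb{C}^+. -/
open Filter Topology MeasureTheory intervalIntegral

private lemma den_ne_zero {c : ℝ} {s : ℂ} (hs : 0 < s.im) :
    (1 : ℂ) + (c : ℂ) * s ≠ 0 := by
  intro h
  have h1 : ((1 : ℂ) + (c : ℂ) * s).im = c * s.im := by simp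
  rw [h] at h1
  rcases mul_eq_zero.mp h1.symm with h2 | h2
  · rw [h2] at h; simp at h
  · exact hs.ne' h2

private lemma ptwise_bound (c : ℝ) (hc : 0 ≤ c) (a b : ℂ) (ha : 0 < a.im) (hb : 0 < b.im)
    (y : ℝ) (hy : 0 < y) :
    y * ‖a‖ * ‖b‖ * ‖(c:ℂ)^2 / ((1+(c:ℂ)*a)*(1+(c:ℂ)*b))‖ ≤
      (y * Complex.normSq a * (c^2 / Complex.normSq (1+(c:ℂ)*a))
       + y * Complex.normSq b * (c^2 / Complex.normSq (1+(c:ℂ)*b))) / 2 := by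
  have d1 : 0 < ‖(1:ℂ)+(c:ℂ)*a‖ := norm_pos_iff.mpr (den_ne_zero ha)
  have d2 : 0 < ‖(1:ℂ)+(c:ℂ)*b‖ := norm_pos_iff.mpr (den_ne_zero hb)
  have hna : Complex.normSq a = ‖a‖^2 := by
    rw [Complex.normSq_eq_norm_sq]
  have hnb : Complex.normSq b = ‖b‖^2 := by
    rw [Complex.normSq_eq_norm_sq]
  have hn1 : Complex.normSq ((1:ℂ)+(c:ℂ)*a) = ‖(1:ℂ)+(c:ℂ)*a‖^2 := by
    rw [Complex.normSq_eq_norm_sq]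
  have hn2 : Complex.normSq ((1:ℂ)+(c:ℂ)*b) = ‖(1:ℂ)+(c:ℂ)*b‖^2 := by
    rw [Complex.normSq_eq_norm_sq]
  have hnorm : ‖(c:ℂ)^2 / ((1+(c:ℂ)*a)*(1+(c:ℂ)*b))‖
      = c^2 / (‖(1:ℂ)+(c:ℂ)*a‖ * ‖(1:ℂ)+(c:ℂ)*b‖) := by
    rw [norm_div, norm_mul, norm_pow, Complex.norm_real, Real.norm_eq_abs, abs_of_nonneg hc]
  rw [hnorm, hna, hnb, hn1, hn2]
  set u := ‖(1:ℂ)+(c:ℂ)*a‖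
  set v := ‖(1:ℂ)+(c:ℂ)*b‖
  have hA := norm_nonneg a
  have hB := norm_nonneg b
  have hu := d1.ne'
  have hv := d2.ne'
  field_simp
  nlinarith [mul_nonneg (sq_nonneg c)
      (sq_nonneg (‖a‖*v - ‖b‖*u))]

private lemma stieltjes_im_bound (y : ℝ) (f : ℝ → ℝ)
    (hf_cont : ContinuousOn f (Set.Icc 0 (2 * Real.pi)))
    (z s : ℂ) (hz : 0 < z.im) (hs : 0 < s.im)
    (heq : s⁻¹ = -z + y * ∫ ω in (0:ℝ)..(2 * Real.pi), (f ω : ℂ) / (1 + (f ω : ℂ) * s)) :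
    y * (∫ ω in (0:ℝ)..(2 * Real.pi), (f ω)^2 / Complex.normSq (1 + (f ω : ℂ) * s))
      * Complex.normSq s < 1 := by
  have hπ : (0:ℝ) ≤ 2 * Real.pi := by positivity
  have hcf : ContinuousOn (fun ω => ((f ω : ℂ))) (Set.Icc 0 (2*Real.pi)) :=
    Complex.continuous_ofReal.comp_continuousOn hf_cont
  have hgc : ContinuousOn (fun ω => (f ω : ℂ) / (1 + (f ω : ℂ) * s)) (Set.Icc 0 (2*Real.pi)) :=
    hcf.div (continuousOn_const.add (hcf.mul continuousOn_const))
      (fun ω _ => den_ne_zero hs)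
  have hgi : IntervalIntegrable (fun ω => (f ω : ℂ) / (1 + (f ω : ℂ) * s))
      volume 0 (2*Real.pi) := hgc.intervalIntegrable_of_Icc hπ
  have him1 : (∫ ω in (0:ℝ)..(2*Real.pi), ((f ω : ℂ) / (1 + (f ω : ℂ) * s)).im)
      = (∫ ω in (0:ℝ)..(2*Real.pi), (f ω : ℂ) / (1 + (f ω : ℂ) * s)).im := by
    simpa using Complex.imCLM.intervalIntegral_comp_comm hgi
  have hptim : ∀ ω : ℝ, ((f ω : ℂ) / (1 + (f ω : ℂ) * s)).im
      = -s.im * ((f ω)^2 / Complex.normSq (1 + (f ω : ℂ) * s)) := by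
    intro ω
    rw [Complex.div_im]
    simp [Complex.normSq_apply]
    ring
  have him2 : (∫ ω in (0:ℝ)..(2*Real.pi), (f ω : ℂ) / (1 + (f ω : ℂ) * s)).im
      = -s.im * ∫ ω in (0:ℝ)..(2*Real.pi), (f ω)^2 / Complex.normSq (1 + (f ω : ℂ) * s) := by
    rw [← him1]
    simp_rw [hptim]
    exact intervalIntegral.integral_const_mul _ _
  have him := congrArg Complex.im heq
  rw [Complex.inv_im] at him
  simp only [Complex.add_im, Complex.neg_im, Complex.mul_im, Complex.ofReal_re,
    Complex.ofReal_im, zero_mul, add_zero, him2] at him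
  set J := ∫ ω in (0:ℝ)..(2*Real.pi), (f ω)^2 / Complex.normSq (1 + (f ω : ℂ) * s) with hJ
  have hns : 0 < Complex.normSq s := Complex.normSq_pos.mpr (fun h => by simp [h] at hs)
  have him' : -s.im = (-z.im + y * (-s.im * J)) * Complex.normSq s := by
    field_simp at him
    linarith [him]
  nlinarith [mul_pos hz hns, mul_pos hs hns, him']

/-- **Uniqueness of the solution of the Stieltjes-transform equation.**
Let `y > 0` and let `f : [0, 2π] → [0, ∞)` be continuous.  Then there is at most
one function `s : ℂ⁺ → ℂ⁺` satisfying
`1 / s(z) = -z + y ∫_0^{2π} f(ω) / (1 + f(ω) s(z)) dω` for all `z ∈ ℂ⁺`. -/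
theorem uniqueness_of_stieltjes_equation
    (y : ℝ) (hy : 0 < y) (f : ℝ → ℝ)
    (hf_cont : ContinuousOn f (Set.Icc 0 (2 * Real.pi)))
    (hf_nonneg : ∀ ω ∈ Set.Icc 0 (2 * Real.pi), 0 ≤ f ω)
    (s₁ s₂ : ℂ → ℂ)
    (hs₁_map : ∀ z : ℂ, 0 < z.im → 0 < (s₁ z).im)
    (hs₂_map : ∀ z : ℂ, 0 < z.im → 0 < (s₂ z).im)
    (hs₁_eq : ∀ z : ℂ, 0 < z.im →
      (s₁ z)⁻¹ = -z + y * ∫ ω in (0:ℝ)..(2 * Real.pi), (f ω : ℂ) / (1 + (f ω : ℂ) * s₁ z))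
    (hs₂_eq : ∀ z : ℂ, 0 < z.im →
      (s₂ z)⁻¹ = -z + y * ∫ ω in (0:ℝ)..(2 * Real.pi), (f ω : ℂ) / (1 + (f ω : ℂ) * s₂ z)) :
    ∀ z : ℂ, 0 < z.im → s₁ z = s₂ z := by
  intro z hz
  by_contra hab
  set a := s₁ z with ha_def
  set b := s₂ z with hb_def
  have ha : 0 < a.im := hs₁_map z hz
  have hb : 0 < b.im := hs₂_map z hz
  have ha0 : a ≠ 0 := fun h => by simp [h] at ha
  have hb0 : b ≠ 0 := fun h => by simp [h] at hb
  have hπ : (0:ℝ) ≤ 2 * Real.pi := by positivity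
  have hIcc : Set.uIcc (0:ℝ) (2 * Real.pi) = Set.Icc 0 (2 * Real.pi) := Set.uIcc_of_le hπ
  have hcf : ContinuousOn (fun ω => ((f ω : ℂ))) (Set.Icc 0 (2*Real.pi)) :=
    Complex.continuous_ofReal.comp_continuousOn hf_cont
  have hdca : ContinuousOn (fun ω => (1 : ℂ) + (f ω : ℂ) * a) (Set.Icc 0 (2*Real.pi)) :=
    continuousOn_const.add (hcf.mul continuousOn_const)
  have hdcb : ContinuousOn (fun ω => (1 : ℂ) + (f ω : ℂ) * b) (Set.Icc 0 (2*Real.pi)) :=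
    continuousOn_const.add (hcf.mul continuousOn_const)
  have hga : IntervalIntegrable (fun ω => (f ω : ℂ) / (1 + (f ω : ℂ) * a))
      volume 0 (2*Real.pi) :=
    (hcf.div hdca (fun ω _ => den_ne_zero ha)).intervalIntegrable_of_Icc hπ
  have hgb : IntervalIntegrable (fun ω => (f ω : ℂ) / (1 + (f ω : ℂ) * b))
      volume 0 (2*Real.pi) :=
    (hcf.div hdcb (fun ω _ => den_ne_zero hb)).intervalIntegrable_of_Icc hπ
  set K := ∫ ω in (0:ℝ)..(2*Real.pi),
      (f ω : ℂ)^2 / ((1 + (f ω : ℂ) * a) * (1 + (f ω : ℂ) * b)) with hK_def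
  -- step 1 : 1 = y * K * (a * b)
  have e1 : a⁻¹ - b⁻¹ = y * ((∫ ω in (0:ℝ)..(2*Real.pi), (f ω : ℂ) / (1 + (f ω : ℂ) * a))
      - ∫ ω in (0:ℝ)..(2*Real.pi), (f ω : ℂ) / (1 + (f ω : ℂ) * b)) := by
    rw [hs₁_eq z hz, hs₂_eq z hz]; ring
  have e2 : (∫ ω in (0:ℝ)..(2*Real.pi), (f ω : ℂ) / (1 + (f ω : ℂ) * a))
      - (∫ ω in (0:ℝ)..(2*Real.pi), (f ω : ℂ) / (1 + (f ω : ℂ) * b)) = (b - a) * K := by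
    rw [← intervalIntegral.integral_sub hga hgb, hK_def,
      ← intervalIntegral.integral_const_mul]
    apply intervalIntegral.integral_congr
    intro ω hω
    rw [hIcc] at hω
    have d1 := den_ne_zero (c := f ω) ha
    have d2 := den_ne_zero (c := f ω) hb
    field_simp
    ring
  have hba : b - a ≠ 0 := sub_ne_zero.mpr (Ne.symm hab)
  have e4 : (a*b)⁻¹ = (y : ℂ) * K := by
    apply mul_left_cancel₀ hba
    rw [e2] at e1
    rw [inv_sub_inv ha0 hb0, div_eq_mul_inv] at e1
    linear_combination e1
  have e5 : (y : ℂ) * K * (a*b) = 1 := by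
    rw [← e4]
    exact inv_mul_cancel₀ (mul_ne_zero ha0 hb0)
  -- step 2 : norms
  have e6 : (1:ℝ) = y * ‖K‖ * (‖a‖ * ‖b‖) := by
    have := congrArg norm e5
    simp only [norm_mul, Complex.norm_real, Real.norm_eq_abs, abs_of_pos hy,
      norm_one] at this
    linarith [this]

  -- step 3 : integral comparison
  have hhc : ContinuousOn
      (fun ω => (f ω : ℂ)^2 / ((1 + (f ω : ℂ) * a) * (1 + (f ω : ℂ) * b)))
      (Set.Icc 0 (2*Real.pi)) :=
    (hcf.pow 2).div (hdca.mul hdcb)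
      (fun ω _ => mul_ne_zero (den_ne_zero ha) (den_ne_zero hb))
  have hNi : IntervalIntegrable
      (fun ω => ‖(f ω : ℂ)^2 / ((1 + (f ω : ℂ) * a) * (1 + (f ω : ℂ) * b))‖)
      volume 0 (2*Real.pi) := hhc.norm.intervalIntegrable_of_Icc hπ
  have hφac : ContinuousOn (fun ω => (f ω)^2 / Complex.normSq (1 + (f ω : ℂ) * a))
      (Set.Icc 0 (2*Real.pi)) :=
    (hf_cont.pow 2).div (Complex.continuous_normSq.comp_continuousOn hdca)
      (fun ω _ => (Complex.normSq_pos.mpr (den_ne_zero ha)).ne')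
  have hφbc : ContinuousOn (fun ω => (f ω)^2 / Complex.normSq (1 + (f ω : ℂ) * b))
      (Set.Icc 0 (2*Real.pi)) :=
    (hf_cont.pow 2).div (Complex.continuous_normSq.comp_continuousOn hdcb)
      (fun ω _ => (Complex.normSq_pos.mpr (den_ne_zero hb)).ne')
  have hφai : IntervalIntegrable (fun ω => (f ω)^2 / Complex.normSq (1 + (f ω : ℂ) * a))
      volume 0 (2*Real.pi) := hφac.intervalIntegrable_of_Icc hπ
  have hφbi : IntervalIntegrable (fun ω => (f ω)^2 / Complex.normSq (1 + (f ω : ℂ) * b))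
      volume 0 (2*Real.pi) := hφbc.intervalIntegrable_of_Icc hπ
  have hKn : ‖K‖ ≤ ∫ ω in (0:ℝ)..(2*Real.pi),
      ‖(f ω : ℂ)^2 / ((1 + (f ω : ℂ) * a) * (1 + (f ω : ℂ) * b))‖ :=
    intervalIntegral.norm_integral_le_integral_norm hπ
  have h7 : (1:ℝ) ≤ y * ‖a‖ * ‖b‖ * ∫ ω in (0:ℝ)..(2*Real.pi),
      ‖(f ω : ℂ)^2 / ((1 + (f ω : ℂ) * a) * (1 + (f ω : ℂ) * b))‖ := by
    have h := mul_le_mul_of_nonneg_left hKn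
      (show (0:ℝ) ≤ y * ‖a‖ * ‖b‖ by positivity)
    nlinarith [e6, h]
  have h8 : (∫ ω in (0:ℝ)..(2*Real.pi), y * ‖a‖ * ‖b‖ *
        ‖(f ω : ℂ)^2 / ((1 + (f ω : ℂ) * a) * (1 + (f ω : ℂ) * b))‖)
      ≤ ∫ ω in (0:ℝ)..(2*Real.pi),
        (y * Complex.normSq a * ((f ω)^2 / Complex.normSq (1 + (f ω : ℂ) * a))
         + y * Complex.normSq b * ((f ω)^2 / Complex.normSq (1 + (f ω : ℂ) * b))) / 2 := by
    apply intervalIntegral.integral_mono_on hπ (hNi.const_mul _)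
      (((hφai.const_mul _).add (hφbi.const_mul _)).div_const 2)
    intro ω hω
    exact ptwise_bound (f ω) (hf_nonneg ω hω) a b ha hb y hy
  have h9 : (∫ ω in (0:ℝ)..(2*Real.pi), y * ‖a‖ * ‖b‖ *
        ‖(f ω : ℂ)^2 / ((1 + (f ω : ℂ) * a) * (1 + (f ω : ℂ) * b))‖)
      = y * ‖a‖ * ‖b‖ * ∫ ω in (0:ℝ)..(2*Real.pi),
        ‖(f ω : ℂ)^2 / ((1 + (f ω : ℂ) * a) * (1 + (f ω : ℂ) * b))‖ :=
    intervalIntegral.integral_const_mul _ _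
  have h10 : (∫ ω in (0:ℝ)..(2*Real.pi),
        (y * Complex.normSq a * ((f ω)^2 / Complex.normSq (1 + (f ω : ℂ) * a))
         + y * Complex.normSq b * ((f ω)^2 / Complex.normSq (1 + (f ω : ℂ) * b))) / 2)
      = (y * Complex.normSq a *
          (∫ ω in (0:ℝ)..(2*Real.pi), (f ω)^2 / Complex.normSq (1 + (f ω : ℂ) * a))
         + y * Complex.normSq b *
          (∫ ω in (0:ℝ)..(2*Real.pi), (f ω)^2 / Complex.normSq (1 + (f ω : ℂ) * b))) / 2 := by
    rw [intervalIntegral.integral_div,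
      intervalIntegral.integral_add (hφai.const_mul _) (hφbi.const_mul _),
      intervalIntegral.integral_const_mul, intervalIntegral.integral_const_mul]
  have hA := stieltjes_im_bound y f hf_cont z a hz ha (hs₁_eq z hz)
  have hB := stieltjes_im_bound y f hf_cont z b hz hb (hs₂_eq z hz)
  have hA' : y * Complex.normSq a *
      (∫ ω in (0:ℝ)..(2*Real.pi), (f ω)^2 / Complex.normSq (1 + (f ω : ℂ) * a)) < 1 := by
    nlinarith [hA]
  have hB' : y * Complex.normSq b *
      (∫ ω in (0:ℝ)..(2*Real.pi), (f ω)^2 / Complex.normSq (1 + (f ω : ℂ) * b)) < 1 := by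
    nlinarith [hB]
  rw [← h9] at h7
  rw [h10] at h8
  linarith
end

section
/- Let \mathbf{X} = (X_{(i-1)n+t})_{it} and \widetilde{\mathbf{X}} = (\widetilde X_{(i-1)n+t})_{it} be the p \times n matrices built from the linear process X_t = \sum_{j=0}^\infty c_j Z_{t-j} and its truncation \widetilde X_t = \sum_{j=0}^{n} c_j Z_{t-j}, and set \Delta := p^{-2} \mathrm{tr}((\mathbf{X}-\widetilde{\mathbf{X}})(\mathbf{X}-\widetilde{\mathbf{X}})^T). Under conditions (Z1) on (Z_t) and |c_j| \le C(j+1)^{-1-\delta} (C, \delta > 0), in the regime p/n \to y \in (0,\infty) one has E[\Delta^2] = O(n^{-2-2\delta}). -/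
open MeasureTheory ProbabilityTheory Matrix Filter Topology
open scoped ENNReal NNReal
set_option linter.unusedSectionVars false
set_option maxHeartbeats 1000000

section AuxiliaryLemmas

lemma abs_pow_le_aux (x : ℝ) {k : ℕ} (hk : k ≤ 4) : |x ^ k| ≤ 1 + x ^ 4 := by
  have h4 : (0:ℝ) ≤ x ^ 4 := by positivity
  rw [abs_pow]
  rcases le_or_gt (|x|) 1 with h | h
  · have := pow_le_one₀ (abs_nonneg x) h (n := k)
    linarith
  · have h1 : |x| ^ k ≤ |x| ^ 4 := pow_le_pow_right₀ h.le hk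
    have h2 : |x| ^ 4 = x ^ 4 := by
      rw [← abs_pow]; exact abs_of_nonneg h4
    linarith

variable {Ω : Type*} [MeasureSpace Ω] [IsProbabilityMeasure (ℙ : Measure Ω)]

lemma integrable_pow_le {g : Ω → ℝ} (hg : Measurable g)
    (h4 : Integrable (fun ω => g ω ^ 4) ℙ) {k : ℕ} (hk : k ≤ 4) :
    Integrable (fun ω => g ω ^ k) ℙ := by
  refine Integrable.mono' ((integrable_const 1).add h4)
    ((hg.pow_const k).aestronglyMeasurable) (ae_of_all _ fun ω => ?_)
  simpa [Real.norm_eq_abs] using abs_pow_le_aux (g ω) hk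

lemma indep_integral_mul {X Y : Ω → ℝ} (h : IndepFun X Y ℙ)
    (hX : Integrable X ℙ) (hY : Integrable Y ℙ) :
    ∫ ω, X ω * Y ω = (∫ ω, X ω) * ∫ ω, Y ω :=
  h.integral_fun_mul_eq_mul_integral hX.aestronglyMeasurable hY.aestronglyMeasurable

lemma indep_integrable_mul {X Y : Ω → ℝ} (h : IndepFun X Y ℙ)
    (hX : Integrable X ℙ) (hY : Integrable Y ℙ) :
    Integrable (fun ω => X ω * Y ω) ℙ := h.integrable_mul hX hY

lemma step_moment {S b : Ω → ℝ} (hind : IndepFun S b ℙ)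
    (hSmeas : Measurable S) (hbmeas : Measurable b)
    {σ4 V q : ℝ} (hσ1 : 1 ≤ σ4) (hV : 0 ≤ V) (hq : 0 ≤ q)
    (hS4i : Integrable (fun ω => S ω ^ 4) ℙ) (hb4i : Integrable (fun ω => b ω ^ 4) ℙ)
    (hSmean : ∫ ω, S ω = 0) (hbmean : ∫ ω, b ω = 0)
    (hS2 : ∫ ω, S ω ^ 2 ≤ V) (hb2 : ∫ ω, b ω ^ 2 = q)
    (hS4le : ∫ ω, S ω ^ 4 ≤ 3 * σ4 * V ^ 2) (hb4 : ∫ ω, b ω ^ 4 ≤ σ4 * q ^ 2) :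
    Integrable (fun ω => (S ω + b ω) ^ 4) ℙ ∧ (∫ ω, (S ω + b ω)) = 0 ∧
    (∫ ω, (S ω + b ω) ^ 2) ≤ V + q ∧ (∫ ω, (S ω + b ω) ^ 4) ≤ 3 * σ4 * (V + q) ^ 2 := by
  have hSk : ∀ k, k ≤ 4 → Integrable (fun ω => S ω ^ k) ℙ :=
    fun k hk => integrable_pow_le hSmeas hS4i hk
  have hbk : ∀ k, k ≤ 4 → Integrable (fun ω => b ω ^ k) ℙ :=
    fun k hk => integrable_pow_le hbmeas hb4i hk
  have hSint : Integrable S ℙ := by simpa using hSk 1 (by norm_num)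
  have hbint : Integrable b ℙ := by simpa using hbk 1 (by norm_num)
  have hindk : ∀ k l : ℕ, IndepFun (fun ω => S ω ^ k) (fun ω => b ω ^ l) ℙ :=
    fun k l => hind.comp (measurable_id.pow_const k) (measurable_id.pow_const l)
  have hmul : ∀ k l : ℕ, k ≤ 4 → l ≤ 4 →
      (∫ ω, S ω ^ k * b ω ^ l) = (∫ ω, S ω ^ k) * ∫ ω, b ω ^ l :=
    fun k l hk hl => indep_integral_mul (hindk k l) (hSk k hk) (hbk l hl)
  have hmuli : ∀ k l : ℕ, k ≤ 4 → l ≤ 4 → Integrable (fun ω => S ω ^ k * b ω ^ l) ℙ :=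
    fun k l hk hl => indep_integrable_mul (hindk k l) (hSk k hk) (hbk l hl)
  have hS1' : ∫ ω, S ω ^ 1 = 0 := by simpa using hSmean
  have hb1' : ∫ ω, b ω ^ 1 = 0 := by simpa using hbmean
  have hS2n : 0 ≤ ∫ ω, S ω ^ 2 := integral_nonneg fun ω => by positivity
  -- integrable pieces of the 4th power expansion
  have iA : Integrable (fun ω => S ω ^ 4) ℙ := hS4i
  have iB : Integrable (fun ω => 4 * (S ω ^ 3 * b ω ^ 1)) ℙ :=
    (hmuli 3 1 (by norm_num) (by norm_num)).const_mul 4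
  have iC : Integrable (fun ω => 6 * (S ω ^ 2 * b ω ^ 2)) ℙ :=
    (hmuli 2 2 (by norm_num) (by norm_num)).const_mul 6
  have iD : Integrable (fun ω => 4 * (S ω ^ 1 * b ω ^ 3)) ℙ :=
    (hmuli 1 3 (by norm_num) (by norm_num)).const_mul 4
  have iE : Integrable (fun ω => b ω ^ 4) ℙ := hb4i
  have hexp4 : (fun ω => (S ω + b ω) ^ 4) = fun ω =>
      S ω ^ 4 + 4 * (S ω ^ 3 * b ω ^ 1) + 6 * (S ω ^ 2 * b ω ^ 2)
        + 4 * (S ω ^ 1 * b ω ^ 3) + b ω ^ 4 := by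
    funext ω; ring
  have iAB : Integrable (fun ω => S ω ^ 4 + 4 * (S ω ^ 3 * b ω ^ 1)) ℙ := iA.add iB
  have iABC : Integrable (fun ω => S ω ^ 4 + 4 * (S ω ^ 3 * b ω ^ 1)
      + 6 * (S ω ^ 2 * b ω ^ 2)) ℙ := iAB.add iC
  have iABCD : Integrable (fun ω => S ω ^ 4 + 4 * (S ω ^ 3 * b ω ^ 1)
      + 6 * (S ω ^ 2 * b ω ^ 2) + 4 * (S ω ^ 1 * b ω ^ 3)) ℙ := iABC.add iD
  have hint4 : Integrable (fun ω => (S ω + b ω) ^ 4) ℙ := by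
    rw [hexp4]; exact iABCD.add iE
  have hI4 : (∫ ω, (S ω + b ω) ^ 4) =
      (∫ ω, S ω ^ 4) + 4 * ((∫ ω, S ω ^ 3) * ∫ ω, b ω ^ 1)
        + 6 * ((∫ ω, S ω ^ 2) * ∫ ω, b ω ^ 2)
        + 4 * ((∫ ω, S ω ^ 1) * ∫ ω, b ω ^ 3) + ∫ ω, b ω ^ 4 := by
    rw [hexp4, integral_add iABCD iE, integral_add iABC iD, integral_add iAB iC,
      integral_add iA iB, integral_const_mul, integral_const_mul, integral_const_mul,
      hmul 3 1 (by norm_num) (by norm_num), hmul 2 2 (by norm_num) (by norm_num),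
      hmul 1 3 (by norm_num) (by norm_num)]
  refine ⟨hint4, ?_, ?_, ?_⟩
  · rw [show (fun ω => S ω + b ω) = fun ω => S ω + b ω from rfl,
      integral_add hSint hbint, hSmean, hbmean]; ring
  · have hexp2 : (fun ω => (S ω + b ω) ^ 2) = fun ω =>
        S ω ^ 2 + 2 * (S ω ^ 1 * b ω ^ 1) + b ω ^ 2 := by funext ω; ring
    have i2B : Integrable (fun ω => 2 * (S ω ^ 1 * b ω ^ 1)) ℙ :=
      (hmuli 1 1 (by norm_num) (by norm_num)).const_mul 2
    have i2AB : Integrable (fun ω => S ω ^ 2 + 2 * (S ω ^ 1 * b ω ^ 1)) ℙ :=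
      (hSk 2 (by norm_num)).add i2B
    rw [hexp2, integral_add i2AB (hbk 2 (by norm_num)),
      integral_add (hSk 2 (by norm_num)) i2B, integral_const_mul,
      hmul 1 1 (by norm_num) (by norm_num), hS1', hb2]
    linarith
  · rw [hI4, hS1', hb1']
    have h1 : 0 ≤ q * (V - ∫ ω, S ω ^ 2) := mul_nonneg hq (by linarith)
    have h2 : 0 ≤ q * V * (σ4 - 1) := mul_nonneg (mul_nonneg hq hV) (by linarith)
    nlinarith [hS4le, hb4, sq_nonneg q]

lemma sum_moment
    (Z : ℤ → Ω → ℝ) (hZmeas : ∀ t, Measurable (Z t))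
    (hZindep : iIndepFun Z ℙ)
    (hZmean : ∀ t, ∫ ω, Z t ω = 0) (hZvar : ∀ t, ∫ ω, (Z t ω) ^ 2 = 1)
    (σ4 : ℝ) (hσ1 : 1 ≤ σ4) (hZ4int : ∀ t, Integrable (fun ω => (Z t ω) ^ 4) ℙ)
    (hσ4 : ∀ t, ∫ ω, (Z t ω) ^ 4 ≤ σ4)
    (β : ℕ → ℝ) (e : ℤ) :
    ∀ m : ℕ,
      Integrable (fun ω => (∑ j ∈ Finset.range m, β j * Z (e - j) ω) ^ 4) ℙ ∧
      (∫ ω, (∑ j ∈ Finset.range m, β j * Z (e - j) ω)) = 0 ∧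
      (∫ ω, (∑ j ∈ Finset.range m, β j * Z (e - j) ω) ^ 2) ≤ (∑ j ∈ Finset.range m, β j ^ 2) ∧
      (∫ ω, (∑ j ∈ Finset.range m, β j * Z (e - j) ω) ^ 4) ≤
        3 * σ4 * (∑ j ∈ Finset.range m, β j ^ 2) ^ 2 := by
  intro m
  induction m with
  | zero =>
      refine ⟨by simpa using integrable_const (0:ℝ) ^ 4, ?_, ?_, ?_⟩ <;>
        simp
  | succ m ih =>
      obtain ⟨hS4, hSmean, hS2, hS4le⟩ := ih
      have hSmeas : Measurable (fun ω => ∑ j ∈ Finset.range m, β j * Z (e - j) ω) :=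
        Finset.measurable_sum _ fun j _ => (hZmeas _).const_mul _
      have hbmeas : Measurable (fun ω => β m * Z (e - m) ω) := (hZmeas _).const_mul _
      -- independence
      have hind : IndepFun (fun ω => ∑ j ∈ Finset.range m, β j * Z (e - j) ω)
          (fun ω => β m * Z (e - m) ω) ℙ := by
        set Y : ℤ → Ω → ℝ := fun k ω => β (e - k).toNat * Z k ω with hYdef
        have hYmeas : ∀ k, Measurable (Y k) := fun k => (hZmeas k).const_mul _
        have hYindep : iIndepFun Y ℙ :=
          hZindep.comp (fun k x => β (e - k).toNat * x)
            (fun k => measurable_id.const_mul _)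
        have hYj : ∀ j : ℕ, (fun ω => Y (e - j) ω) = fun ω => β j * Z (e - j) ω := by
          intro j; funext ω
          have h : (e - (e - (j:ℤ))).toNat = j := by omega
          simp only [hYdef, h]
        have hnot : e - (m:ℤ) ∉ (Finset.range m).image (fun j : ℕ => e - (j:ℤ)) := by
          simp only [Finset.mem_image, Finset.mem_range, not_exists]
          rintro j ⟨hj, h⟩; omega
        have h1 : IndepFun (∑ k ∈ (Finset.range m).image (fun j : ℕ => e - (j:ℤ)), Y k)
            (Y (e - (m:ℤ))) ℙ := hYindep.indepFun_finsetSum_of_notMem hYmeas hnot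
        have h2 : (∑ k ∈ (Finset.range m).image (fun j : ℕ => e - (j:ℤ)), Y k)
            = fun ω => ∑ j ∈ Finset.range m, β j * Z (e - j) ω := by
          funext ω
          rw [Finset.sum_apply, Finset.sum_image (by intro a _ b _ h; simp only at h; omega)]
          exact Finset.sum_congr rfl fun j _ => congrFun (hYj j) ω
        have h3 : Y (e - (m:ℤ)) = fun ω => β m * Z (e - m) ω := hYj m
        rwa [h2, h3] at h1
      -- moments of b
      have hZm := hZmeas (e - (m:ℤ))
      have hb4i : Integrable (fun ω => (β m * Z (e - m) ω) ^ 4) ℙ := by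
        have : (fun ω => (β m * Z (e - m) ω) ^ 4)
            = fun ω => β m ^ 4 * Z (e - m) ω ^ 4 := by funext ω; ring
        rw [this]; exact (hZ4int _).const_mul _
      have hbmean : ∫ ω, β m * Z (e - m) ω = 0 := by
        rw [integral_const_mul, hZmean]; ring
      have hb2 : ∫ ω, (β m * Z (e - m) ω) ^ 2 = β m ^ 2 := by
        have : (fun ω => (β m * Z (e - m) ω) ^ 2)
            = fun ω => β m ^ 2 * Z (e - m) ω ^ 2 := by funext ω; ring
        rw [this, integral_const_mul, hZvar, mul_one]
      have hb4 : ∫ ω, (β m * Z (e - m) ω) ^ 4 ≤ σ4 * (β m ^ 2) ^ 2 := by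
        have h : (fun ω => (β m * Z (e - m) ω) ^ 4)
            = fun ω => β m ^ 4 * Z (e - m) ω ^ 4 := by funext ω; ring
        rw [h, integral_const_mul]
        have := mul_le_mul_of_nonneg_left (hσ4 (e - (m:ℤ))) (by positivity : (0:ℝ) ≤ β m ^ 4)
        nlinarith [this]
      have hV0 : (0:ℝ) ≤ ∑ j ∈ Finset.range m, β j ^ 2 :=
        Finset.sum_nonneg fun j _ => sq_nonneg _
      have := step_moment hind hSmeas hbmeas hσ1 hV0 (sq_nonneg (β m))
        hS4 hb4i hSmean hbmean hS2 hb2 hS4le hb4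
      obtain ⟨h₁, h₂, h₃, h₄⟩ := this
      simp only [Finset.sum_range_succ]
      exact ⟨h₁, h₂, h₃, h₄⟩

lemma tail_bound
    (Z : ℤ → Ω → ℝ) (hZmeas : ∀ t, Measurable (Z t))
    (hZindep : iIndepFun Z ℙ)
    (hZmean : ∀ t, ∫ ω, Z t ω = 0) (hZvar : ∀ t, ∫ ω, (Z t ω) ^ 2 = 1)
    (σ4 : ℝ) (hσ1 : 1 ≤ σ4) (hZ4int : ∀ t, Integrable (fun ω => (Z t ω) ^ 4) ℙ)
    (hσ4 : ∀ t, ∫ ω, (Z t ω) ^ 4 ≤ σ4)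
    (c : ℕ → ℝ) (hca : Summable fun j => |c j|) (hc2 : Summable fun j => (c j) ^ 2)
    (n : ℕ) (e : ℤ) :
    AEStronglyMeasurable (fun ω => (∑' j : ℕ, c j * Z (e - j) ω)
        - ∑ j ∈ Finset.range (n+1), c j * Z (e - j) ω) ℙ ∧
    ∫⁻ ω, ENNReal.ofReal (((∑' j : ℕ, c j * Z (e - j) ω)
        - ∑ j ∈ Finset.range (n+1), c j * Z (e - j) ω) ^ 4)
      ≤ ENNReal.ofReal (3 * σ4 * (∑' j : ℕ, (c (j + (n+1))) ^ 2) ^ 2) := by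
  have hameas : ∀ j : ℕ, Measurable (fun ω => c j * Z (e - j) ω) :=
    fun j => (hZmeas _).const_mul _
  have hZ2int : ∀ t, Integrable (fun ω => Z t ω ^ 2) ℙ :=
    fun t => integrable_pow_le (hZmeas t) (hZ4int t) (by norm_num)
  -- a.e. summability
  have hG : (∫⁻ ω, ∑' j : ℕ, (‖c j * Z (e - j) ω‖₊ : ℝ≥0∞)) < ⊤ := by
    rw [lintegral_tsum (fun j => (hameas j).nnnorm.coe_nnreal_ennreal.aemeasurable)]
    have hper : ∀ j : ℕ, (∫⁻ ω, (‖c j * Z (e - j) ω‖₊ : ℝ≥0∞))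
        ≤ ENNReal.ofReal (|c j| * 2) := by
      intro j
      have h1 : (∫⁻ ω, (‖c j * Z (e - j) ω‖₊ : ℝ≥0∞))
          ≤ ∫⁻ ω, ENNReal.ofReal (|c j| * (1 + Z (e - j) ω ^ 2)) := by
        refine lintegral_mono fun ω => ?_
        rw [← ENNReal.ofReal_coe_nnreal, coe_nnnorm, Real.norm_eq_abs]
        refine ENNReal.ofReal_le_ofReal ?_
        rw [abs_mul]
        refine mul_le_mul_of_nonneg_left ?_ (abs_nonneg _)
        nlinarith [sq_nonneg (|Z (e - j) ω| - 1), sq_abs (Z (e - j) ω)]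
      refine h1.trans ?_
      have h2 : ∀ ω, ENNReal.ofReal (|c j| * (1 + Z (e - j) ω ^ 2))
          = ENNReal.ofReal |c j| * ENNReal.ofReal (1 + Z (e - j) ω ^ 2) :=
        fun ω => ENNReal.ofReal_mul (abs_nonneg _)
      simp_rw [h2]
      rw [lintegral_const_mul' _ _ ENNReal.ofReal_ne_top]
      have hadd : Integrable (fun ω => 1 + Z (e - j) ω ^ 2) ℙ :=
        (integrable_const 1).add (hZ2int (e - j))
      have h3 : (∫⁻ ω, ENNReal.ofReal (1 + Z (e - j) ω ^ 2)) = ENNReal.ofReal 2 := by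
        rw [← ofReal_integral_eq_lintegral_ofReal hadd (ae_of_all _ fun ω => by positivity)]
        congr 1
        rw [integral_add (integrable_const 1) (hZ2int (e - j)), hZvar]
        simp
        norm_num
      rw [h3, ← ENNReal.ofReal_mul (abs_nonneg _)]
    calc (∑' j : ℕ, ∫⁻ ω, (‖c j * Z (e - j) ω‖₊ : ℝ≥0∞))
        ≤ ∑' j : ℕ, ENNReal.ofReal (|c j| * 2) :=
          ENNReal.tsum_le_tsum hper
      _ = ENNReal.ofReal (∑' j : ℕ, |c j| * 2) :=
          (ENNReal.ofReal_tsum_of_nonneg (fun j => by positivity) (hca.mul_right 2)).symm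
      _ < ⊤ := ENNReal.ofReal_lt_top
  have hsummable : ∀ᵐ ω, Summable fun j : ℕ => c j * Z (e - j) ω := by
    have h := ae_lt_top (Measurable.ennreal_tsum fun j =>
      (hameas j).nnnorm.coe_nnreal_ennreal) hG.ne
    filter_upwards [h] with ω hω
    exact Summable.of_nnnorm (ENNReal.tsum_coe_ne_top_iff_summable.mp hω.ne)
  -- tail partial sums
  set β : ℕ → ℝ := fun j => c (j + (n+1)) with hβdef
  set e' : ℤ := e - ((n:ℤ) + 1) with he'def
  have hcoef : ∀ m ω, (∑ j ∈ Finset.range m, β j * Z (e' - j) ω)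
      = ∑ j ∈ Finset.range m, c (j + (n+1)) * Z (e - ((j + (n+1) : ℕ) : ℤ)) ω := by
    intro m ω
    refine Finset.sum_congr rfl fun j _ => ?_
    have : e' - (j:ℤ) = e - ((j + (n+1) : ℕ) : ℤ) := by push_cast [he'def]; ring
    rw [this]
  have htendsto : ∀ᵐ ω, Tendsto (fun m => ∑ j ∈ Finset.range m, β j * Z (e' - j) ω) atTop
      (𝓝 ((∑' j : ℕ, c j * Z (e - j) ω) - ∑ j ∈ Finset.range (n+1), c j * Z (e - j) ω)) := by
    filter_upwards [hsummable] with ω hω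
    have htail : Summable fun j : ℕ => c (j + (n+1)) * Z (e - ((j + (n+1) : ℕ) : ℤ)) ω :=
      ((summable_nat_add_iff (n+1)).2 hω)
    have hDeq : (∑' j : ℕ, c j * Z (e - j) ω) - (∑ j ∈ Finset.range (n+1), c j * Z (e - j) ω)
        = ∑' j : ℕ, c (j + (n+1)) * Z (e - ((j + (n+1) : ℕ) : ℤ)) ω := by
      have h := Summable.sum_add_tsum_nat_add (n+1) hω
      linarith [h]
    rw [hDeq]
    have := htail.hasSum.tendsto_sum_nat
    refine this.congr fun m => ?_
    exact (hcoef m ω).symm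
  have hSmmeas : ∀ m : ℕ, Measurable (fun ω => ∑ j ∈ Finset.range m, β j * Z (e' - j) ω) :=
    fun m => Finset.measurable_sum _ fun j _ => (hZmeas _).const_mul _
  constructor
  · exact aestronglyMeasurable_of_tendsto_ae atTop
      (fun m => (hSmmeas m).aestronglyMeasurable) htendsto
  · have hβ2sum : Summable fun j => β j ^ 2 := (summable_nat_add_iff (n+1)).2 hc2
    have hptwise : ∀ᵐ ω, ENNReal.ofReal (((∑' j : ℕ, c j * Z (e - j) ω)
        - ∑ j ∈ Finset.range (n+1), c j * Z (e - j) ω) ^ 4)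
        = atTop.liminf fun m =>
            ENNReal.ofReal ((∑ j ∈ Finset.range m, β j * Z (e' - j) ω) ^ 4) := by
      filter_upwards [htendsto] with ω hω
      exact ((ENNReal.tendsto_ofReal (hω.pow 4)).liminf_eq).symm
    rw [lintegral_congr_ae hptwise]
    have hmeas4 : ∀ m : ℕ, Measurable fun ω =>
        ENNReal.ofReal ((∑ j ∈ Finset.range m, β j * Z (e' - j) ω) ^ 4) :=
      fun m => ((hSmmeas m).pow_const 4).ennreal_ofReal
    refine (lintegral_liminf_le hmeas4).trans ?_
    have hbd : ∀ m : ℕ, (∫⁻ ω, ENNReal.ofReal ((∑ j ∈ Finset.range m, β j * Z (e' - j) ω) ^ 4))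
        ≤ ENNReal.ofReal (3 * σ4 * (∑' j : ℕ, (c (j + (n+1))) ^ 2) ^ 2) := by
      intro m
      obtain ⟨h4i, -, -, h4le⟩ := sum_moment Z hZmeas hZindep hZmean hZvar σ4 hσ1 hZ4int hσ4 β e' m
      rw [← ofReal_integral_eq_lintegral_ofReal h4i (ae_of_all _ fun ω => by positivity)]
      refine ENNReal.ofReal_le_ofReal (h4le.trans ?_)
      have hVm : (∑ j ∈ Finset.range m, β j ^ 2) ≤ ∑' j : ℕ, β j ^ 2 :=
        Summable.sum_le_tsum _ (fun i _ => sq_nonneg _) hβ2sum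
      have h0 : (0:ℝ) ≤ ∑ j ∈ Finset.range m, β j ^ 2 :=
        Finset.sum_nonneg fun j _ => sq_nonneg _
      have hσ0 : (0:ℝ) ≤ 3 * σ4 := by linarith
      have : (∑ j ∈ Finset.range m, β j ^ 2) ^ 2 ≤ (∑' j : ℕ, β j ^ 2) ^ 2 :=
        pow_le_pow_left₀ h0 hVm 2
      exact mul_le_mul_of_nonneg_left this hσ0
    calc atTop.liminf (fun m => ∫⁻ ω,
          ENNReal.ofReal ((∑ j ∈ Finset.range m, β j * Z (e' - j) ω) ^ 4))
        ≤ atTop.liminf (fun _ : ℕ =>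
            ENNReal.ofReal (3 * σ4 * (∑' j : ℕ, (c (j + (n+1))) ^ 2) ^ 2)) :=
          liminf_le_liminf (Eventually.of_forall hbd)
      _ = _ := liminf_const _

end AuxiliaryLemmas

/-- **Second moment of the truncation error.** With
`Δ = p⁻² tr((𝐗 - 𝐗̃)(𝐗 - 𝐗̃)ᵀ)`, under (Z1) and the polynomial decay of the coefficients,
in the regime `p/n → y ∈ (0,∞)` one has `E[Δ²] = O(n^{-2-2δ})`. -/
theorem truncation_error_second_moment
    {ΩS : Type*} [MeasureSpace ΩS] [IsProbabilityMeasure (ℙ : Measure ΩS)]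
    (Z : ℤ → ΩS → ℝ) (hZmeas : ∀ t, Measurable (Z t))
    (hZindep : iIndepFun Z ℙ)
    -- condition (Z1)
    (hZmean : ∀ t, ∫ ω, Z t ω = 0) (hZvar : ∀ t, ∫ ω, (Z t ω) ^ 2 = 1)
    (σ4 : ℝ) (hZ4int : ∀ t, Integrable (fun ω => (Z t ω) ^ 4))
    (hσ4 : ∀ t, ∫ ω, (Z t ω) ^ 4 ≤ σ4)
    -- coefficient decay
    (c : ℕ → ℝ) (C δ : ℝ) (hC : 0 < C) (hδ : 0 < δ)
    (hc : ∀ j : ℕ, |c j| ≤ C * ((j : ℝ) + 1) ^ (-(1 + δ)))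
    -- aspect ratio
    (p : ℕ → ℕ) (y : ℝ) (hy : 0 < y)
    (hpn : Tendsto (fun n => (p n : ℝ) / (n : ℝ)) atTop (𝓝 y))
    -- the matrices 𝐗 and 𝐗̃
    (M Mt : (n : ℕ) → ΩS → Matrix (Fin (p n)) (Fin n) ℝ)
    (hM : ∀ n ω i t, M n ω i t = ∑' j : ℕ, c j * Z ((i : ℤ) * n + (t : ℤ) + 1 - (j : ℤ)) ω)
    (hMt : ∀ n ω i t, Mt n ω i t =
      ∑ j ∈ Finset.range (n + 1), c j * Z ((i : ℤ) * n + (t : ℤ) + 1 - (j : ℤ)) ω) :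
    ∃ K : ℝ, ∀ n : ℕ,
      (∫ ω, (((p n : ℝ) ^ 2)⁻¹ *
          Matrix.trace ((M n ω - Mt n ω) * (M n ω - Mt n ω)ᵀ)) ^ 2)
        ≤ K * (n : ℝ) ^ (-(2 + 2 * δ)) := by
  have hZ2int : ∀ t, Integrable (fun ω => Z t ω ^ 2) ℙ :=
    fun t => integrable_pow_le (hZmeas t) (hZ4int t) (by norm_num)
  -- σ4 ≥ 1
  have hσ1 : 1 ≤ σ4 := by
    have hnn : 0 ≤ ∫ ω, (Z 0 ω ^ 2 - 1) ^ 2 := integral_nonneg fun ω => sq_nonneg _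
    have hexp : (fun ω => (Z 0 ω ^ 2 - 1) ^ 2)
        = fun ω => (Z 0 ω ^ 4 - 2 * Z 0 ω ^ 2) + 1 := by funext ω; ring
    have hi1 : Integrable (fun ω => Z 0 ω ^ 4 - 2 * Z 0 ω ^ 2) ℙ :=
      (hZ4int 0).sub ((hZ2int 0).const_mul 2)
    rw [hexp, integral_add hi1 (integrable_const 1),
      integral_sub (hZ4int 0) ((hZ2int 0).const_mul 2), integral_const_mul, hZvar 0] at hnn
    simp only [integral_const, measure_univ, probReal_univ, ENNReal.toReal_one, smul_eq_mul, one_mul,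
      mul_one] at hnn
    linarith [hσ4 0]
  have hσ0 : (0:ℝ) ≤ σ4 := by linarith
  -- summability of the coefficients
  have hδ1 : -(1+δ) < -1 := by linarith
  have hrs : Summable (fun j : ℕ => ((j:ℝ)+1) ^ (-(1+δ))) := by
    have h := Real.summable_nat_rpow.mpr hδ1
    exact ((summable_nat_add_iff 1).2 h).congr fun j => by norm_cast
  have hca : Summable fun j => |c j| :=
    Summable.of_nonneg_of_le (fun j => abs_nonneg _) hc (hrs.mul_left C)
  have hrs1 : ∀ j : ℕ, ((j:ℝ)+1) ^ (-(1+δ)) ≤ 1 := fun j =>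
    Real.rpow_le_one_of_one_le_of_nonpos (by push_cast; linarith [Nat.cast_nonneg (α := ℝ) j])
      (by linarith)
  have hrpos : ∀ j : ℕ, 0 ≤ ((j:ℝ)+1) ^ (-(1+δ)) := fun j => Real.rpow_nonneg (by positivity) _
  have hc2 : Summable fun j => (c j) ^ 2 := by
    refine Summable.of_nonneg_of_le (fun j => sq_nonneg _) (fun j => ?_) (hrs.mul_left (C^2))
    have h2 : |c j|^2 ≤ (C * ((j:ℝ)+1)^(-(1+δ)))^2 := pow_le_pow_left₀ (abs_nonneg _) (hc j) 2
    have h3 := hrs1 j; have h4 := hrpos j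
    nlinarith [sq_abs (c j), sq_nonneg C,
      mul_le_mul_of_nonneg_left h3 (mul_nonneg (sq_nonneg C) h4)]
  set S0 : ℝ := ∑' j : ℕ, ((j:ℝ)+1) ^ (-(1+δ)) with hS0def
  have hS0 : 0 ≤ S0 := tsum_nonneg hrpos
  -- tail coefficient bound
  have hVb : ∀ n : ℕ, (∑' j : ℕ, (c (j + (n+1))) ^ 2) ≤ C^2 * ((n:ℝ)+2)^(-(1+δ)) * S0 := by
    intro n
    have hsum1 : Summable fun j : ℕ => (c (j + (n+1)))^2 := (summable_nat_add_iff (n+1)).2 hc2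
    have hsum2 : Summable fun j : ℕ => C^2 * ((n:ℝ)+2)^(-(1+δ)) * (((j:ℝ)+1)^(-(1+δ))) :=
      hrs.mul_left _
    have hper : ∀ j : ℕ, (c (j + (n+1)))^2
        ≤ C^2*((n:ℝ)+2)^(-(1+δ)) * (((j:ℝ)+1)^(-(1+δ))) := by
      intro j
      have hb := hc (j + (n+1))
      have hu : ((j + (n+1) : ℕ):ℝ) + 1 = (j:ℝ) + (n:ℝ) + 2 := by push_cast; ring
      rw [hu] at hb
      have hjn : (0:ℝ) ≤ (j:ℝ) := Nat.cast_nonneg j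
      have hnn : (0:ℝ) ≤ (n:ℝ) := Nat.cast_nonneg n
      have h1 : ((j:ℝ)+(n:ℝ)+2) ^ (-(1+δ)) ≤ ((n:ℝ)+2)^(-(1+δ)) :=
        Real.rpow_le_rpow_of_nonpos (by linarith) (by linarith) (by linarith)
      have h2 : ((j:ℝ)+(n:ℝ)+2) ^ (-(1+δ)) ≤ ((j:ℝ)+1)^(-(1+δ)) :=
        Real.rpow_le_rpow_of_nonpos (by linarith) (by linarith) (by linarith)
      have h0 : (0:ℝ) ≤ ((j:ℝ)+(n:ℝ)+2)^(-(1+δ)) := Real.rpow_nonneg (by linarith) _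
      have h0' : (0:ℝ) ≤ ((n:ℝ)+2)^(-(1+δ)) := Real.rpow_nonneg (by linarith) _
      have hsq : (c (j+(n+1)))^2 ≤ (C * (((j:ℝ)+(n:ℝ)+2)^(-(1+δ))))^2 := by
        have := pow_le_pow_left₀ (abs_nonneg _) hb 2
        rw [sq_abs] at this; exact this
      have hmm := mul_le_mul h1 h2 h0 h0'
      nlinarith [sq_nonneg C]
    have := Summable.tsum_le_tsum hper hsum1 hsum2
    rwa [tsum_mul_left] at this
  have hV0 : ∀ n : ℕ, (0:ℝ) ≤ ∑' j : ℕ, (c (j + (n+1)))^2 :=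
    fun n => tsum_nonneg fun j => sq_nonneg _
  -- ratio bound
  have hratio : Tendsto (fun n : ℕ => ((n:ℝ)/(p n))^2) atTop (𝓝 ((y⁻¹)^2)) := by
    have h1 : Tendsto (fun n : ℕ => ((p n:ℝ)/(n:ℝ))⁻¹) atTop (𝓝 y⁻¹) := hpn.inv₀ (ne_of_gt hy)
    exact (h1.congr fun n => inv_div _ _).pow 2
  obtain ⟨A, hA⟩ := hratio.bddAbove_range
  have hAn : ∀ n : ℕ, ((n:ℝ)/(p n))^2 ≤ A := fun n => hA (Set.mem_range_self n)
  have hA0 : 0 ≤ A := le_trans (sq_nonneg _) (hAn 0)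
  have hK0 : 0 ≤ 3*σ4*C^4*S0^2*A := by positivity
  refine ⟨3*σ4*C^4*S0^2*A, fun n => ?_⟩
  rcases Nat.eq_zero_or_pos n with hn0 | hn1
  · subst hn0
    have hzero : ∀ ω : ΩS, (((p 0 : ℝ) ^ 2)⁻¹ *
        Matrix.trace ((M 0 ω - Mt 0 ω) * (M 0 ω - Mt 0 ω)ᵀ)) ^ 2 = 0 := by
      intro ω
      have : Matrix.trace ((M 0 ω - Mt 0 ω) * (M 0 ω - Mt 0 ω)ᵀ) = 0 := by
        simp [Matrix.trace, Matrix.mul_apply]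
      rw [this]; ring
    simp only [hzero]
    rw [integral_zero, Nat.cast_zero, Real.zero_rpow (by linarith : -(2+2*δ) ≠ 0), mul_zero]
  · -- main case
    set V : ℝ := ∑' j : ℕ, (c (j + (n+1)))^2 with hVdef
    have htb := fun (i : Fin (p n)) (t : Fin n) =>
      tail_bound Z hZmeas hZindep hZmean hZvar σ4 hσ1 hZ4int hσ4 c hca hc2 n
        ((i : ℤ) * n + (t : ℤ) + 1)
    obtain ⟨D, hDeq, hDA, hbd⟩ : ∃ D : Fin (p n) → Fin n → ΩS → ℝ,
        (∀ ω i t, (M n ω - Mt n ω) i t = D i t ω) ∧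
        (∀ i t, AEStronglyMeasurable (D i t) ℙ) ∧
        (∀ i t, (∫⁻ ω, ENNReal.ofReal ((D i t ω)^4))
          ≤ ENNReal.ofReal (3*σ4*V^2)) := by
      refine ⟨fun i t ω => (∑' j : ℕ, c j * Z ((i : ℤ) * n + (t : ℤ) + 1 - (j : ℤ)) ω)
          - ∑ j ∈ Finset.range (n+1), c j * Z ((i : ℤ) * n + (t : ℤ) + 1 - (j : ℤ)) ω,
        ?_, fun i t => (htb i t).1, fun i t => (htb i t).2⟩
      intro ω i t
      rw [Matrix.sub_apply, hM, hMt]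
    have htr : ∀ ω, Matrix.trace ((M n ω - Mt n ω) * (M n ω - Mt n ω)ᵀ)
        = ∑ i, ∑ t, (D i t ω)^2 := by
      intro ω
      simp only [Matrix.trace, Matrix.diag, Matrix.mul_apply, Matrix.transpose_apply]
      refine Finset.sum_congr rfl fun i _ => Finset.sum_congr rfl fun t _ => ?_
      rw [hDeq ω i t]; ring
    have hgoal : (fun ω => (((p n : ℝ) ^ 2)⁻¹ *
          Matrix.trace ((M n ω - Mt n ω) * (M n ω - Mt n ω)ᵀ)) ^ 2)
        = fun ω => (((p n : ℝ) ^ 2)⁻¹ * ∑ i, ∑ t, (D i t ω)^2) ^ 2 := by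
      funext ω; rw [htr ω]
    rw [hgoal]
    have hfA : AEStronglyMeasurable
        (fun ω => (((p n : ℝ) ^ 2)⁻¹ * ∑ i, ∑ t, (D i t ω)^2) ^ 2) ℙ := by
      apply AEStronglyMeasurable.pow
      apply AEStronglyMeasurable.const_mul
      exact Finset.aestronglyMeasurable_fun_sum _ fun i _ =>
        Finset.aestronglyMeasurable_fun_sum _ fun t _ => (hDA i t).pow 2
    rw [integral_eq_lintegral_of_nonneg_ae (ae_of_all _ fun ω => sq_nonneg _) hfA]
    set cst : ℝ := (((p n : ℝ)^2)⁻¹)^2 * ((p n : ℝ) * n) with hcstdef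
    have hcst0 : 0 ≤ cst := by positivity
    have hpt : ∀ ω, (((p n : ℝ)^2)⁻¹ * ∑ i, ∑ t, (D i t ω)^2)^2
        ≤ cst * ∑ i, ∑ t, (D i t ω)^4 := by
      intro ω
      have hCS := Finset.sum_mul_sq_le_sq_mul_sq Finset.univ
        (fun x : Fin (p n) × Fin n => (D x.1 x.2 ω)^2) (fun _ => (1:ℝ))
      simp only [mul_one, one_pow] at hCS
      have hcard : (∑ _x : Fin (p n) × Fin n, (1:ℝ)) = (p n : ℝ) * n := by
        simp [Finset.sum_const, Finset.card_univ]
      have h1 : (∑ x : Fin (p n) × Fin n, ((D x.1 x.2 ω)^2)^2) = ∑ i, ∑ t, (D i t ω)^4 := by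
        rw [Fintype.sum_prod_type]
        exact Finset.sum_congr rfl fun i _ => Finset.sum_congr rfl fun t _ => by ring
      have h2 : (∑ x : Fin (p n) × Fin n, (D x.1 x.2 ω)^2) = ∑ i, ∑ t, (D i t ω)^2 :=
        Fintype.sum_prod_type _
      rw [h2, h1, hcard] at hCS
      calc (((p n : ℝ)^2)⁻¹ * ∑ i, ∑ t, (D i t ω)^2)^2
          = (((p n : ℝ)^2)⁻¹)^2 * (∑ i, ∑ t, (D i t ω)^2)^2 := by ring
        _ ≤ (((p n : ℝ)^2)⁻¹)^2 * ((∑ i, ∑ t, (D i t ω)^4) * ((p n : ℝ)*n)) :=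
            mul_le_mul_of_nonneg_left hCS (by positivity)
        _ = cst * ∑ i, ∑ t, (D i t ω)^4 := by rw [hcstdef]; ring
    have hlin : (∫⁻ ω, ENNReal.ofReal ((((p n : ℝ)^2)⁻¹ * ∑ i, ∑ t, (D i t ω)^2)^2))
        ≤ ENNReal.ofReal (cst * ((p n : ℝ) * n) * (3*σ4*V^2)) := by
      have step1 : (∫⁻ ω, ENNReal.ofReal ((((p n : ℝ)^2)⁻¹ * ∑ i, ∑ t, (D i t ω)^2)^2))
          ≤ ∫⁻ ω, ENNReal.ofReal (cst * ∑ i, ∑ t, (D i t ω)^4) :=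
        lintegral_mono fun ω => ENNReal.ofReal_le_ofReal (hpt ω)
      refine step1.trans ?_
      have step2 : (∫⁻ ω, ENNReal.ofReal (cst * ∑ i, ∑ t, (D i t ω)^4))
          = ENNReal.ofReal cst * ∑ i, ∑ t, ∫⁻ ω, ENNReal.ofReal ((D i t ω)^4) := by
        have hsum : ∀ ω : ΩS, ENNReal.ofReal (∑ i, ∑ t, (D i t ω)^4)
            = ∑ i, ∑ t, ENNReal.ofReal ((D i t ω)^4) := by
          intro ω
          rw [ENNReal.ofReal_sum_of_nonneg
            (fun i _ => Finset.sum_nonneg fun t _ => by positivity)]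
          exact Finset.sum_congr rfl fun i _ =>
            ENNReal.ofReal_sum_of_nonneg (fun t _ => by positivity)
        simp_rw [ENNReal.ofReal_mul hcst0, hsum]
        rw [lintegral_const_mul' _ _ ENNReal.ofReal_ne_top,
          lintegral_finset_sum' _ (fun i _ => Finset.aemeasurable_fun_sum _ fun t _ =>
            ((hDA i t).aemeasurable.pow_const 4).ennreal_ofReal)]
        congr 1
        exact Finset.sum_congr rfl fun i _ => lintegral_finset_sum' _ (fun t _ =>
          ((hDA i t).aemeasurable.pow_const 4).ennreal_ofReal)
      rw [step2]
      have step3 : (∑ i : Fin (p n), ∑ t : Fin n, ∫⁻ ω, ENNReal.ofReal ((D i t ω)^4))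
          ≤ ∑ _i : Fin (p n), ∑ _t : Fin n, ENNReal.ofReal (3*σ4*V^2) :=
        Finset.sum_le_sum fun i _ => Finset.sum_le_sum fun t _ => hbd i t
      have step4 : (∑ _i : Fin (p n), ∑ _t : Fin n, ENNReal.ofReal (3*σ4*V^2))
          = ENNReal.ofReal ((p n : ℝ) * n) * ENNReal.ofReal (3*σ4*V^2) := by
        simp only [Finset.sum_const, Finset.card_univ, Fintype.card_fin, nsmul_eq_mul]
        rw [ENNReal.ofReal_mul (by positivity : (0:ℝ) ≤ ((p n : ℕ):ℝ)),
          ENNReal.ofReal_natCast, ENNReal.ofReal_natCast]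
        ring
      calc ENNReal.ofReal cst * ∑ i, ∑ t, ∫⁻ ω, ENNReal.ofReal ((D i t ω)^4)
          ≤ ENNReal.ofReal cst *
              (ENNReal.ofReal ((p n : ℝ) * n) * ENNReal.ofReal (3*σ4*V^2)) := by
            rw [← step4]; exact mul_le_mul_right step3 _
        _ = ENNReal.ofReal (cst * ((p n : ℝ) * n) * (3*σ4*V^2)) := by
            rw [ENNReal.ofReal_mul (show (0:ℝ) ≤ cst * ((p n : ℝ) * n) by positivity),
              ENNReal.ofReal_mul hcst0]
            ring
    -- pass to real numbers
    have hB0 : 0 ≤ cst * ((p n : ℝ) * n) * (3*σ4*V^2) := by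
      have := hV0 n
      have h1 : 0 ≤ 3*σ4*V^2 := by positivity
      positivity
    have htoR : (∫⁻ ω, ENNReal.ofReal
          ((((p n : ℝ)^2)⁻¹ * ∑ i, ∑ t, (D i t ω)^2)^2)).toReal
        ≤ cst * ((p n : ℝ) * n) * (3*σ4*V^2) := by
      refine le_trans (ENNReal.toReal_mono ENNReal.ofReal_ne_top hlin) ?_
      rw [ENNReal.toReal_ofReal hB0]
    refine htoR.trans ?_
    -- final numeric bound
    rcases Nat.eq_zero_or_pos (p n) with hp0 | hp1
    · rw [hcstdef, hp0]
      simp only [Nat.cast_zero]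
      ring_nf
      positivity
    · have hP : (0:ℝ) < p n := by exact_mod_cast hp1
      have hN : (0:ℝ) < n := by exact_mod_cast hn1
      have hcsteq : cst * ((p n : ℝ) * n) * (3*σ4*V^2)
          = 3*σ4*((n:ℝ)/(p n))^2 * V^2 := by
        rw [hcstdef]; field_simp
      rw [hcsteq]
      have e1 : 3*σ4*((n:ℝ)/(p n))^2 * V^2 ≤ 3*σ4*A * V^2 :=
        mul_le_mul_of_nonneg_right
          (mul_le_mul_of_nonneg_left (hAn n) (by linarith)) (sq_nonneg V)
      have h2 : V^2 ≤ (C^2*((n:ℝ)+2)^(-(1+δ))*S0)^2 := pow_le_pow_left₀ (hV0 n) (hVb n) 2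
      have e2 : 3*σ4*A*V^2 ≤ 3*σ4*A*(C^2*((n:ℝ)+2)^(-(1+δ))*S0)^2 :=
        mul_le_mul_of_nonneg_left h2 (by positivity)
      have h3 : (((n:ℝ)+2)^(-(1+δ)))^2 = ((n:ℝ)+2)^(-(2+2*δ)) := by
        rw [← Real.rpow_natCast (((n:ℝ)+2)^(-(1+δ))) 2, ← Real.rpow_mul (by positivity)]
        norm_num
        ring_nf
      have h4 : ((n:ℝ)+2)^(-(2+2*δ)) ≤ (n:ℝ)^(-(2+2*δ)) :=
        Real.rpow_le_rpow_of_nonpos hN (by linarith) (by linarith)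
      have e3 : 3*σ4*A*(C^2*((n:ℝ)+2)^(-(1+δ))*S0)^2
          = 3*σ4*A*(C^4*S0^2*((n:ℝ)+2)^(-(2+2*δ))) := by
        rw [← h3]; ring
      have e4 : 3*σ4*A*(C^4*S0^2*((n:ℝ)+2)^(-(2+2*δ)))
          ≤ 3*σ4*A*(C^4*S0^2*(n:ℝ)^(-(2+2*δ))) := by
        refine mul_le_mul_of_nonneg_left ?_ (by positivity)
        exact mul_le_mul_of_nonneg_left h4 (by positivity)
      have e5 : 3*σ4*A*(C^4*S0^2*(n:ℝ)^(-(2+2*δ)))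
          = 3*σ4*C^4*S0^2*A * (n:ℝ)^(-(2+2*δ)) := by ring
      linarith [e1, e2, e3.le, e4, e5.le]
end

section
/- Let \widetilde X_t = \sum_{j=0}^{n} c_j Z_{t-j} and \widetilde{\mathbf{X}} = (\widetilde X_{(i-1)n+t})_{i=1..p, t=1..n}. Let \mathbf{Z} = (Z_{(i-2)n+t})_{i=1..p+1, t=1..n} \in \mathbb{R}^{(p+1)\times n}. Then \widetilde{\mathbf{X}} = [0\;\; \mathbf{1}_p\;\; \mathbf{1}_p\;\; 0] \cdot \mathrm{diag}(\mathbf{Z}, \mathbf{Z}) \cdot [\chi_n(K_n^T) ; \bar\chi_n(K_n)], where the left factor is the p \times 2(p+1) block matrix [0, \mathbf{1}_p, \mathbf{1}_p, 0] (blocks of widths 1, p, p, 1), the middle factor is the 2(p+1) \times 2n block-diagonal matrix with two copies of \mathbf{Z}, and the right factor is the 2n \times n matrix obtained by stacking \chi_n(K_n^T) on top of \bar\chi_n(K_n). -/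
open Matrix

/-- The `m × m` shift matrix `K_m`, with ones on the subdiagonal. -/
def Kmat (m : ℕ) : Matrix (Fin m) (Fin m) ℝ :=
  Matrix.of fun i j => if (i : ℕ) = (j : ℕ) + 1 then 1 else 0

/-- `χ_m(K_mᵀ) = ∑_{j=0}^m c_j (K_mᵀ)^j`. -/
noncomputable def chiK (c : ℕ → ℝ) (m : ℕ) : Matrix (Fin m) (Fin m) ℝ :=
  ∑ j ∈ Finset.range (m + 1), c j • ((Kmat m)ᵀ) ^ j

/-- `χ̄_m(K_m) = ∑_{j=0}^m c_{m-j} (K_m)^j`. -/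
noncomputable def chibarK (c : ℕ → ℝ) (m : ℕ) : Matrix (Fin m) (Fin m) ℝ :=
  ∑ j ∈ Finset.range (m + 1), c (m - j) • (Kmat m) ^ j

lemma Kpow_apply (m j : ℕ) (a b : Fin m) :
    ((Kmat m) ^ j) a b = if (a : ℕ) = (b : ℕ) + j then (1:ℝ) else 0 := by
  induction j generalizing a b with
  | zero => simp [Matrix.one_apply, Fin.ext_iff]
  | succ j ih =>
    rw [pow_succ, Matrix.mul_apply]
    by_cases h : (b : ℕ) + 1 < m
    · rw [Finset.sum_eq_single (⟨(b:ℕ)+1, h⟩ : Fin m)]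
      · rw [ih]
        simp [Kmat, show (b:ℕ)+1+j = (b:ℕ)+(j+1) by omega]
      · intro k _ hk
        have : (k : ℕ) ≠ (b:ℕ) + 1 := fun hkb => hk (Fin.ext hkb)
        simp [Kmat, this]
      · simp
    · have h1 : ∀ k : Fin m, Kmat m k b = 0 := by
        intro k
        have := k.isLt
        simp only [Kmat, Matrix.of_apply]
        rw [if_neg (by omega)]
      have := a.isLt
      simp [h1]
      omega

lemma chiK_apply (c : ℕ → ℝ) (m : ℕ) (s t : Fin m) :
    chiK c m s t = ∑ j ∈ Finset.range (m + 1),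
      c j * (if (t : ℕ) = (s : ℕ) + j then 1 else 0) := by
  simp only [chiK, Matrix.sum_apply, Matrix.smul_apply, smul_eq_mul,
    ← Matrix.transpose_pow, Matrix.transpose_apply, Kpow_apply]

lemma chibarK_apply (c : ℕ → ℝ) (m : ℕ) (s t : Fin m) :
    chibarK c m s t = ∑ j ∈ Finset.range (m + 1),
      c (m - j) * (if (s : ℕ) = (t : ℕ) + j then 1 else 0) := by
  simp only [chibarK, Matrix.sum_apply, Matrix.smul_apply, smul_eq_mul, Kpow_apply]

/-- **Representation of the truncated matrix.**
`𝐗̃ = [0 1_p 1_p 0] ⬝ diag(𝐙, 𝐙) ⬝ [χ_n(K_nᵀ) ; χ̄_n(K_n)]`, where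
`𝐗̃ = (X̃_{(i-1)n+t})_{i=1..p, t=1..n}` with `X̃_t = ∑_{j=0}^n c_j Z_{t-j}` and
`𝐙 = (Z_{(i-2)n+t})_{i=1..p+1, t=1..n}`. -/
theorem truncated_matrix_representation
    (Z : ℤ → ℝ) (c : ℕ → ℝ) (p n : ℕ)
    (Xt : Matrix (Fin p) (Fin n) ℝ)
    (hXt : ∀ i t, Xt i t =
      ∑ j ∈ Finset.range (n + 1), c j * Z ((i : ℤ) * n + (t : ℤ) + 1 - (j : ℤ)))
    (Zm : Matrix (Fin (p + 1)) (Fin n) ℝ)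
    (hZm : ∀ i t, Zm i t = Z ((i : ℤ) * n + (t : ℤ) + 1 - (n : ℤ))) :
    Xt = (Matrix.fromCols
            (Matrix.of fun (i : Fin p) (j : Fin (p + 1)) => if (j : ℕ) = (i : ℕ) + 1 then (1:ℝ) else 0)
            (Matrix.of fun (i : Fin p) (j : Fin (p + 1)) => if (j : ℕ) = (i : ℕ) then (1:ℝ) else 0))
         * (Matrix.fromBlocks Zm 0 0 Zm)
         * (Matrix.fromRows (chiK c n) (chibarK c n)) := by
  rw [Matrix.fromCols_mul_fromBlocks]
  simp only [Matrix.mul_zero, add_zero, zero_add]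
  rw [Matrix.fromCols_mul_fromRows]
  ext i t
  rw [Matrix.add_apply, Matrix.mul_apply, Matrix.mul_apply, hXt]
  have hA : ∀ s : Fin n,
      ((Matrix.of fun (i : Fin p) (j : Fin (p + 1)) =>
          if (j : ℕ) = (i : ℕ) + 1 then (1:ℝ) else 0) * Zm) i s
        = Zm ⟨(i : ℕ) + 1, by omega⟩ s := by
    intro s
    rw [Matrix.mul_apply, Finset.sum_eq_single (⟨(i : ℕ) + 1, by omega⟩ : Fin (p + 1))]
    · simp
    · intro k _ hk
      have : (k : ℕ) ≠ (i : ℕ) + 1 := fun h => hk (Fin.ext h)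
      simp [this]
    · simp
  have hB : ∀ s : Fin n,
      ((Matrix.of fun (i : Fin p) (j : Fin (p + 1)) =>
          if (j : ℕ) = (i : ℕ) then (1:ℝ) else 0) * Zm) i s
        = Zm ⟨(i : ℕ), by omega⟩ s := by
    intro s
    rw [Matrix.mul_apply, Finset.sum_eq_single (⟨(i : ℕ), by omega⟩ : Fin (p + 1))]
    · simp
    · intro k _ hk
      have : (k : ℕ) ≠ (i : ℕ) := fun h => hk (Fin.ext h)
      simp [this]
    · simp
  simp only [hA, hB]
  have S1 : ∑ s : Fin n, Zm ⟨(i : ℕ) + 1, by omega⟩ s * chiK c n s t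
      = ∑ j ∈ Finset.range (n + 1),
          (if j ≤ (t : ℕ) then c j * Z ((i : ℤ) * n + (t : ℤ) + 1 - (j : ℤ)) else 0) := by
    simp only [chiK_apply, Finset.mul_sum]
    rw [Finset.sum_comm]
    refine Finset.sum_congr rfl fun j hj => ?_
    by_cases hjt : j ≤ (t : ℕ)
    · rw [if_pos hjt, Finset.sum_eq_single (⟨(t : ℕ) - j, by omega⟩ : Fin n)]
      · rw [hZm, if_pos (by simp; omega)]
        have harg : (((⟨(i : ℕ) + 1, by omega⟩ : Fin (p + 1)) : ℕ) : ℤ) * n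
            + (((t : ℕ) - j : ℕ) : ℤ) + 1 - (n : ℤ)
            = (i : ℤ) * n + (t : ℤ) + 1 - (j : ℤ) := by
          push_cast [hjt]
          ring
        rw [harg]
        ring
      · intro s _ hs
        have : ¬ ((t : ℕ) = (s : ℕ) + j) := by
          intro h
          exact hs (Fin.ext (by simp; omega))
        rw [if_neg this]
        ring
      · simp
    · rw [if_neg hjt]
      refine Finset.sum_eq_zero fun s _ => ?_
      rw [if_neg (by omega : ¬ ((t : ℕ) = (s : ℕ) + j))]
      ring
  have S2 : ∑ s : Fin n, Zm ⟨(i : ℕ), by omega⟩ s * chibarK c n s t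
      = ∑ j ∈ Finset.range (n + 1),
          (if (t : ℕ) < j then c j * Z ((i : ℤ) * n + (t : ℤ) + 1 - (j : ℤ)) else 0) := by
    simp only [chibarK_apply, Finset.mul_sum]
    rw [Finset.sum_comm,
      ← Finset.sum_range_reflect
        (fun j => if (t : ℕ) < j then c j * Z ((i : ℤ) * n + (t : ℤ) + 1 - (j : ℤ)) else 0)
        (n + 1)]
    refine Finset.sum_congr rfl fun j hj => ?_
    have hjn : j ≤ n := by
      simp only [Finset.mem_range] at hj; omega
    have hred : n + 1 - 1 - j = n - j := by omega
    have htn := t.isLt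
    simp only [hred]
    by_cases h : (t : ℕ) + j < n
    · rw [Finset.sum_eq_single (⟨(t : ℕ) + j, h⟩ : Fin n)]
      · rw [hZm, if_pos (by simp), if_pos (by omega : (t : ℕ) < n - j)]
        have harg : (((⟨(i : ℕ), by omega⟩ : Fin (p + 1)) : ℕ) : ℤ) * n
            + (((t : ℕ) + j : ℕ) : ℤ) + 1 - (n : ℤ)
            = (i : ℤ) * n + (t : ℤ) + 1 - ((n - j : ℕ) : ℤ) := by
          push_cast [hjn]
          ring
        rw [harg]
        ring
      · intro s _ hs
        have : ¬ ((s : ℕ) = (t : ℕ) + j) := by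
          intro h'
          exact hs (Fin.ext (by simp; omega))
        rw [if_neg this]
        ring
      · simp
    · rw [if_neg (by omega : ¬ (t : ℕ) < n - j)]
      refine Finset.sum_eq_zero fun s _ => ?_
      have := s.isLt
      rw [if_neg (by omega : ¬ ((s : ℕ) = (t : ℕ) + j))]
      ring
  rw [S1, S2, ← Finset.sum_add_distrib]
  refine Finset.sum_congr rfl fun j hj => ?_
  by_cases h : j ≤ (t : ℕ)
  · rw [if_pos h, if_neg (not_lt.2 h), add_zero]
  · rw [if_neg h, if_pos (not_le.1 h), zero_add]
end
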